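/- Let k be a field of characteristic zero, A a k-vector space with a bilinear product ∗ and a nondegenerate bilinear form ϖ, and let (B, ⋄, ω) be the specific perm algebra on the free k-module on (ℤ×ℤ)×{1,2} with its specific antisymmetric invariant bilinear form ω. Let · be the induced product on A ⊗ B and define 𝔅(a₁ ⊗ b₁, a₂ ⊗ b₂) = ϖ(a₁, a₂)·ω(b₁, b₂). Then the following are equivalent: (i) (A ⊗ B, ·) is a commutative associative algebra and 𝔅 is antisymmetric and satisfies the Connes cocycle condition 𝔅(u₁·u₂, u₃) + 𝔅(u₂·u₃, u₁) + 𝔅(u₃·u₁, u₂) = 0; (ii) (A, ∗, ϖ) is a quasi-Frobenius Zinbiel algebra. -/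

import Mathlib

set_option maxHeartbeats 1600000


open TensorProduct

noncomputable section

def IsZinbiel {k A : Type} [Field k] [AddCommGroup A] [Module k A]
    (ast : A →ₗ[k] A →ₗ[k] A) : Prop :=
  ∀ a₁ a₂ a₃ : A, ast a₁ (ast a₂ a₃) = ast (ast a₁ a₂) a₃ + ast (ast a₂ a₁) a₃

def IsPreLie {k A : Type} [Field k] [AddCommGroup A] [Module k A]
    (circ : A →ₗ[k] A →ₗ[k] A) : Prop :=
  ∀ a₁ a₂ a₃ : A,
    circ (circ a₁ a₂) a₃ - circ a₁ (circ a₂ a₃)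
      = circ (circ a₂ a₁) a₃ - circ a₂ (circ a₁ a₃)

def IsPerm {k B : Type} [Field k] [AddCommGroup B] [Module k B]
    (dia : B →ₗ[k] B →ₗ[k] B) : Prop :=
  ∀ b₁ b₂ b₃ : B,
    dia b₁ (dia b₂ b₃) = dia (dia b₁ b₂) b₃ ∧
    dia (dia b₁ b₂) b₃ = dia (dia b₂ b₁) b₃

def IsPrePoisson {k A : Type} [Field k] [AddCommGroup A] [Module k A]
    (ast circ : A →ₗ[k] A →ₗ[k] A) : Prop :=
  IsZinbiel ast ∧ IsPreLie circ ∧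
  (∀ a₁ a₂ a₃ : A,
    ast (circ a₁ a₂ - circ a₂ a₁) a₃ = circ a₁ (ast a₂ a₃) - ast a₂ (circ a₁ a₃)) ∧
  (∀ a₁ a₂ a₃ : A,
    circ (ast a₁ a₂ + ast a₂ a₁) a₃ = ast a₁ (circ a₂ a₃) + ast a₂ (circ a₁ a₃))

def IsPoisson {k P : Type} [Field k] [AddCommGroup P] [Module k P]
    (mul br : P →ₗ[k] P →ₗ[k] P) : Prop :=
  (∀ u v : P, mul u v = mul v u) ∧
  (∀ u v w : P, mul (mul u v) w = mul u (mul v w)) ∧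
  (∀ u v : P, br u v = - br v u) ∧
  (∀ u v w : P, br (br u v) w + br (br v w) u + br (br w u) v = 0) ∧
  (∀ u v w : P, br u (mul v w) = mul (br u v) w + mul v (br u w))

def idm (k M : Type) [Field k] [AddCommGroup M] [Module k M] : M →ₗ[k] M :=
  LinearMap.id

def tau (k M : Type) [Field k] [AddCommGroup M] [Module k M] :
    M ⊗[k] M →ₗ[k] M ⊗[k] M :=
  (TensorProduct.comm k M M).toLinearMap

def unassoc (k M : Type) [Field k] [AddCommGroup M] [Module k M] :
    M ⊗[k] (M ⊗[k] M) →ₗ[k] (M ⊗[k] M) ⊗[k] M :=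
  (TensorProduct.assoc k M M M).symm.toLinearMap

def intch (k A B : Type) [Field k] [AddCommGroup A] [Module k A]
    [AddCommGroup B] [Module k B] :
    (A ⊗[k] A) ⊗[k] (B ⊗[k] B) →ₗ[k] (A ⊗[k] B) ⊗[k] (A ⊗[k] B) :=
  (TensorProduct.tensorTensorTensorComm k A A B B).toLinearMap

def IsZinbielCo {k A : Type} [Field k] [AddCommGroup A] [Module k A]
    (ϑ : A →ₗ[k] A ⊗[k] A) : Prop :=
  ∀ a : A,
    TensorProduct.map ϑ (idm k A) (ϑ a)
      + TensorProduct.map (tau k A) (idm k A) (TensorProduct.map ϑ (idm k A) (ϑ a))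
    = unassoc k A (TensorProduct.map (idm k A) ϑ (ϑ a))

def IsPermCo {k B : Type} [Field k] [AddCommGroup B] [Module k B]
    (ν : B →ₗ[k] B ⊗[k] B) : Prop :=
  ∀ b : B,
    TensorProduct.map ν (idm k B) (ν b)
      = unassoc k B (TensorProduct.map (idm k B) ν (ν b)) ∧
    TensorProduct.map ν (idm k B) (ν b)
      = TensorProduct.map (tau k B) (idm k B) (TensorProduct.map ν (idm k B) (ν b))

def IsPreLieCo {k A : Type} [Field k] [AddCommGroup A] [Module k A]
    (θ : A →ₗ[k] A ⊗[k] A) : Prop :=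
  ∀ a : A,
    unassoc k A (TensorProduct.map (idm k A) θ (θ a))
      - TensorProduct.map (tau k A) (idm k A)
          (unassoc k A (TensorProduct.map (idm k A) θ (θ a)))
    = TensorProduct.map θ (idm k A) (θ a)
      - TensorProduct.map (tau k A) (idm k A) (TensorProduct.map θ (idm k A) (θ a))

def Zexp {k A : Type} [Field k] [AddCommGroup A] [Module k A]
    (ast : A →ₗ[k] A →ₗ[k] A) {p : ℕ} (x y : Fin p → A) : (A ⊗[k] A) ⊗[k] A :=
  ∑ i : Fin p, ∑ j : Fin p,
    (((ast (x i) (x j)) ⊗ₜ[k] (y j)) ⊗ₜ[k] (y i)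
      + ((y j) ⊗ₜ[k] (ast (x i) (x j))) ⊗ₜ[k] (y i)
      + ((x i) ⊗ₜ[k] (x j)) ⊗ₜ[k] (ast (y i) (y j))
      + ((x j) ⊗ₜ[k] (x i)) ⊗ₜ[k] (ast (y i) (y j))
      - ((x i) ⊗ₜ[k] (ast (y i) (x j))) ⊗ₜ[k] (y j)
      - ((x j) ⊗ₜ[k] (ast (x i) (y j))) ⊗ₜ[k] (y i)
      - ((ast (x i) (y j)) ⊗ₜ[k] (x j)) ⊗ₜ[k] (y i)
      - ((ast (y i) (x j)) ⊗ₜ[k] (x i)) ⊗ₜ[k] (y j))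

def PLexp {k A : Type} [Field k] [AddCommGroup A] [Module k A]
    (circ : A →ₗ[k] A →ₗ[k] A) {p : ℕ} (x y : Fin p → A) : (A ⊗[k] A) ⊗[k] A :=
  ∑ i : Fin p, ∑ j : Fin p,
    (((circ (x i) (x j)) ⊗ₜ[k] (y j)) ⊗ₜ[k] (y i)
      + ((x j) ⊗ₜ[k] (circ (x i) (y j))) ⊗ₜ[k] (y i)
      + ((circ (y i) (x j)) ⊗ₜ[k] (x i)) ⊗ₜ[k] (y j)
      + ((x j) ⊗ₜ[k] (x i)) ⊗ₜ[k] (circ (y i) (y j))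
      - ((y j) ⊗ₜ[k] (circ (x i) (x j))) ⊗ₜ[k] (y i)
      - ((x i) ⊗ₜ[k] (circ (y i) (x j))) ⊗ₜ[k] (y j)
      - ((circ (x i) (y j)) ⊗ₜ[k] (x j)) ⊗ₜ[k] (y i)
      - ((x i) ⊗ₜ[k] (x j)) ⊗ₜ[k] (circ (y i) (y j)))

def AYexp {k P : Type} [Field k] [AddCommGroup P] [Module k P]
    (m : P →ₗ[k] P →ₗ[k] P) {ι : Type} [Fintype ι] (u v : ι → P) :
    (P ⊗[k] P) ⊗[k] P :=
  ∑ α : ι, ∑ β : ι,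
    (((m (u α) (u β)) ⊗ₜ[k] (v α)) ⊗ₜ[k] (v β)
      + ((u α) ⊗ₜ[k] (m (v α) (u β))) ⊗ₜ[k] (v β)
      - ((u β) ⊗ₜ[k] (u α)) ⊗ₜ[k] (m (v α) (v β)))

def CYexp {k P : Type} [Field k] [AddCommGroup P] [Module k P]
    (br : P →ₗ[k] P →ₗ[k] P) {ι : Type} [Fintype ι] (u v : ι → P) :
    (P ⊗[k] P) ⊗[k] P :=
  ∑ α : ι, ∑ β : ι,
    (((br (u α) (u β)) ⊗ₜ[k] (v α)) ⊗ₜ[k] (v β)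
      + ((u α) ⊗ₜ[k] (u β)) ⊗ₜ[k] (br (v α) (v β))
      + ((u α) ⊗ₜ[k] (br (v α) (u β))) ⊗ₜ[k] (v β))

def sharp (k : Type) [Field k] {V : Type} [AddCommGroup V] [Module k V]
    (s : V ⊗[k] V) (ξ : V →ₗ[k] k) : V :=
  TensorProduct.lid k V (LinearMap.rTensor V ξ s)

abbrev PermB (k : Type) [Field k] : Type := ((ℤ × ℤ) × Fin 2) →₀ k

def bB (k : Type) [Field k] (i₁ i₂ : ℤ) (s : Fin 2) : PermB k :=
  Finsupp.single ((i₁, i₂), s) 1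

lemma bB_congr (k : Type) [Field k] (i j i' j' : ℤ) (s : Fin 2)
    (h1 : i = i') (h2 : j = j') : bB k i j s = bB k i' j' s := by rw [h1, h2]

lemma single_bB (k : Type) [Field k] (p q : ℤ) (s : Fin 2) (c : k) :
    (Finsupp.single ((p, q), s) c : PermB k) = c • bB k p q s := by
  rw [bB, Finsupp.smul_single, smul_eq_mul, mul_one]

def coefMap (k A : Type) [Field k] [AddCommGroup A] [Module k A]
    (x : (ℤ × ℤ) × Fin 2) : A ⊗[k] PermB k →ₗ[k] A :=
  (TensorProduct.rid k A).toLinearMap ∘ₗ LinearMap.lTensor A (Finsupp.lapply x)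

lemma coefMap_tmul (k A : Type) [Field k] [AddCommGroup A] [Module k A]
    (x : (ℤ × ℤ) × Fin 2) (a : A) (b : PermB k) :
    coefMap k A x (a ⊗ₜ[k] b) = b x • a := by
  simp [coefMap, TensorProduct.rid_tmul]

theorem statement15 (k A : Type) [Field k] [CharZero k]
    [AddCommGroup A] [Module k A]
    (ast : A →ₗ[k] A →ₗ[k] A)
    (ϖ : A →ₗ[k] A →ₗ[k] k)
    (hnd : ∀ a : A, (∀ a' : A, ϖ a a' = 0) → a = 0)
    (dia : PermB k →ₗ[k] PermB k →ₗ[k] PermB k)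
    (hdia : ∀ (i₁ i₂ j₁ j₂ : ℤ) (s t : Fin 2),
      dia (bB k i₁ i₂ s) (bB k j₁ j₂ t)
        = if s = 0 then bB k (i₁ + j₁ + 1) (i₂ + j₂) t
          else bB k (i₁ + j₁) (i₂ + j₂ + 1) t)
    (ω : PermB k →ₗ[k] PermB k →ₗ[k] k)
    (hω : ∀ (i₁ i₂ j₁ j₂ : ℤ) (s t : Fin 2),
      ω (bB k i₁ i₂ s) (bB k j₁ j₂ t)
        = if s = 1 ∧ t = 0 then (if i₁ + j₁ = 0 ∧ i₂ + j₂ = 0 then (1 : k) else 0)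
          else if s = 0 ∧ t = 1 then -(if i₁ + j₁ = 0 ∧ i₂ + j₂ = 0 then (1 : k) else 0)
          else 0)
    (m : A ⊗[k] PermB k →ₗ[k] A ⊗[k] PermB k →ₗ[k] A ⊗[k] PermB k)
    (hm : ∀ (a₁ a₂ : A) (b₁ b₂ : PermB k),
      m (a₁ ⊗ₜ[k] b₁) (a₂ ⊗ₜ[k] b₂)
        = (ast a₁ a₂) ⊗ₜ[k] (dia b₁ b₂) + (ast a₂ a₁) ⊗ₜ[k] (dia b₂ b₁))
    (Bf : A ⊗[k] PermB k →ₗ[k] A ⊗[k] PermB k →ₗ[k] k)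
    (hBf : ∀ (a₁ a₂ : A) (b₁ b₂ : PermB k),
      Bf (a₁ ⊗ₜ[k] b₁) (a₂ ⊗ₜ[k] b₂) = ϖ a₁ a₂ * ω b₁ b₂)
    :
    ((∀ u v : A ⊗[k] PermB k, m u v = m v u) ∧
     (∀ u v w : A ⊗[k] PermB k, m (m u v) w = m u (m v w)) ∧
     (∀ u v : A ⊗[k] PermB k, Bf u v = - Bf v u) ∧
     (∀ u₁ u₂ u₃ : A ⊗[k] PermB k,
       Bf (m u₁ u₂) u₃ + Bf (m u₂ u₃) u₁ + Bf (m u₃ u₁) u₂ = 0))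
    ↔ (IsZinbiel ast ∧ ((∀ a₁ a₂ : A, ϖ a₁ a₂ = ϖ a₂ a₁) ∧
       (∀ a₁ a₂ a₃ : A,
         ϖ (ast a₁ a₂ + ast a₂ a₁) a₃ = ϖ a₁ (ast a₂ a₃) + ϖ a₂ (ast a₁ a₃)))) := by

  constructor
  · rintro ⟨-, hassoc, hanti, hcocy⟩
    have hsym : ∀ a₁ a₂ : A, ϖ a₁ a₂ = ϖ a₂ a₁ := by
      intro a₁ a₂
      have h := hanti (a₁ ⊗ₜ[k] bB k 0 0 1) (a₂ ⊗ₜ[k] bB k 0 0 0)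
      rw [hBf, hBf, hω, hω] at h
      norm_num at h
      linear_combination h
    refine ⟨?_, hsym, ?_⟩
    · intro a₁ a₂ a₃
      have h := hassoc (a₁ ⊗ₜ[k] bB k 0 0 0) (a₂ ⊗ₜ[k] bB k 0 0 0)
        (a₃ ⊗ₜ[k] bB k 0 0 1)
      simp only [hm, map_add, LinearMap.add_apply] at h
      norm_num [hdia] at h
      have h2 := congrArg (coefMap k A ((2, 0), 1)) h
      simp only [map_add, coefMap_tmul] at h2
      norm_num [bB, Finsupp.single_apply, Prod.ext_iff] at h2
      exact h2.symm
    · intro a₁ a₂ a₃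
      have h := hcocy (a₁ ⊗ₜ[k] bB k 0 0 0) (a₂ ⊗ₜ[k] bB k 0 0 0)
        (a₃ ⊗ₜ[k] bB k (-1) 0 1)
      simp only [hm, map_add, LinearMap.add_apply, hBf] at h
      norm_num [hdia, hω] at h
      rw [map_add, LinearMap.add_apply]
      linear_combination -h - hsym a₁ (ast a₂ a₃) - hsym a₂ (ast a₁ a₃)
  · rintro ⟨hzin, hsym, hinv⟩
    -- key consequence of symmetry and invariance
    have K : ∀ x y z : A,
        ϖ (ast x y) z + ϖ (ast y x) z - ϖ (ast y z) x - ϖ (ast x z) y = 0 := by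
      intro x y z
      have h := hinv x y z
      simp only [map_add, LinearMap.add_apply] at h
      linear_combination h + hsym x (ast y z) + hsym y (ast x z)
    -- perm identities for dia, basis level
    have pd1b : ∀ (p₁ q₁ p₂ q₂ p₃ q₃ : ℤ) (s₁ s₂ s₃ : Fin 2),
        dia (bB k p₁ q₁ s₁) (dia (bB k p₂ q₂ s₂) (bB k p₃ q₃ s₃))
          = dia (dia (bB k p₁ q₁ s₁) (bB k p₂ q₂ s₂)) (bB k p₃ q₃ s₃) := by
      intro p₁ q₁ p₂ q₂ p₃ q₃ s₁ s₂ s₃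
      fin_cases s₁ <;> fin_cases s₂ <;> simp [hdia] <;>
        exact bB_congr k _ _ _ _ _ (by ring) (by ring)
    have pd2b : ∀ (p₁ q₁ p₂ q₂ p₃ q₃ : ℤ) (s₁ s₂ s₃ : Fin 2),
        dia (dia (bB k p₁ q₁ s₁) (bB k p₂ q₂ s₂)) (bB k p₃ q₃ s₃)
          = dia (dia (bB k p₂ q₂ s₂) (bB k p₁ q₁ s₁)) (bB k p₃ q₃ s₃) := by
      intro p₁ q₁ p₂ q₂ p₃ q₃ s₁ s₂ s₃
      fin_cases s₁ <;> fin_cases s₂ <;> simp [hdia] <;>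
        exact bB_congr k _ _ _ _ _ (by ring) (by ring)
    -- lift pd1 to all elements
    have pd1c : ∀ (p₁ q₁ p₂ q₂ : ℤ) (s₁ s₂ : Fin 2) (b₃ : PermB k),
        dia (bB k p₁ q₁ s₁) (dia (bB k p₂ q₂ s₂) b₃)
          = dia (dia (bB k p₁ q₁ s₁) (bB k p₂ q₂ s₂)) b₃ := by
      intro p₁ q₁ p₂ q₂ s₁ s₂ b₃
      induction b₃ using Finsupp.induction_linear with
      | zero => simp
      | add f g hf hg => simp only [map_add, hf, hg]
      | single x c =>
          obtain ⟨⟨p, q⟩, s⟩ := x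
          rw [single_bB]
          simp only [map_smul]
          rw [pd1b]
    have pd1d : ∀ (p₁ q₁ : ℤ) (s₁ : Fin 2) (b₂ b₃ : PermB k),
        dia (bB k p₁ q₁ s₁) (dia b₂ b₃)
          = dia (dia (bB k p₁ q₁ s₁) b₂) b₃ := by
      intro p₁ q₁ s₁ b₂ b₃
      induction b₂ using Finsupp.induction_linear with
      | zero => simp
      | add f g hf hg => simp only [map_add, LinearMap.add_apply, hf, hg]
      | single x c =>
          obtain ⟨⟨p, q⟩, s⟩ := x
          rw [single_bB]
          simp only [map_smul, LinearMap.smul_apply, map_smul]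
          rw [pd1c]
    have pd1 : ∀ b₁ b₂ b₃ : PermB k,
        dia b₁ (dia b₂ b₃) = dia (dia b₁ b₂) b₃ := by
      intro b₁ b₂ b₃
      induction b₁ using Finsupp.induction_linear with
      | zero => simp
      | add f g hf hg => simp only [map_add, LinearMap.add_apply, hf, hg]
      | single x c =>
          obtain ⟨⟨p, q⟩, s⟩ := x
          rw [single_bB]
          simp only [map_smul, LinearMap.smul_apply, map_smul]
          rw [pd1d]
    have pd2c : ∀ (p₁ q₁ p₂ q₂ : ℤ) (s₁ s₂ : Fin 2) (b₃ : PermB k),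
        dia (dia (bB k p₁ q₁ s₁) (bB k p₂ q₂ s₂)) b₃
          = dia (dia (bB k p₂ q₂ s₂) (bB k p₁ q₁ s₁)) b₃ := by
      intro p₁ q₁ p₂ q₂ s₁ s₂ b₃
      induction b₃ using Finsupp.induction_linear with
      | zero => simp
      | add f g hf hg => simp only [map_add, hf, hg]
      | single x c =>
          obtain ⟨⟨p, q⟩, s⟩ := x
          rw [single_bB]
          simp only [map_smul]
          rw [pd2b]
    have pd2d : ∀ (p₁ q₁ : ℤ) (s₁ : Fin 2) (b₂ b₃ : PermB k),
        dia (dia (bB k p₁ q₁ s₁) b₂) b₃ = dia (dia b₂ (bB k p₁ q₁ s₁)) b₃ := by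
      intro p₁ q₁ s₁ b₂ b₃
      induction b₂ using Finsupp.induction_linear with
      | zero => simp
      | add f g hf hg => simp only [map_add, LinearMap.add_apply, hf, hg]
      | single x c =>
          obtain ⟨⟨p, q⟩, s⟩ := x
          rw [single_bB]
          simp only [map_smul, LinearMap.smul_apply, map_smul]
          rw [pd2c]
    have pd2 : ∀ b₁ b₂ b₃ : PermB k,
        dia (dia b₁ b₂) b₃ = dia (dia b₂ b₁) b₃ := by
      intro b₁ b₂ b₃
      induction b₁ using Finsupp.induction_linear with
      | zero => simp
      | add f g hf hg => simp only [map_add, LinearMap.add_apply, hf, hg]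
      | single x c =>
          obtain ⟨⟨p, q⟩, s⟩ := x
          rw [single_bB]
          simp only [map_smul, LinearMap.smul_apply, map_smul]
          rw [pd2d]
    -- antisymmetry of ω
    have ωab : ∀ (p₁ q₁ p₂ q₂ : ℤ) (s₁ s₂ : Fin 2),
        ω (bB k p₁ q₁ s₁) (bB k p₂ q₂ s₂) = - ω (bB k p₂ q₂ s₂) (bB k p₁ q₁ s₁) := by
      intro p₁ q₁ p₂ q₂ s₁ s₂
      fin_cases s₁ <;> fin_cases s₂ <;> simp [hω] <;> split_ifs <;>
        first | ring1 | (exfalso; omega)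
    have ωac : ∀ (p₁ q₁ : ℤ) (s₁ : Fin 2) (b₂ : PermB k),
        ω (bB k p₁ q₁ s₁) b₂ = - ω b₂ (bB k p₁ q₁ s₁) := by
      intro p₁ q₁ s₁ b₂
      induction b₂ using Finsupp.induction_linear with
      | zero => simp
      | add f g hf hg =>
          simp only [map_add, LinearMap.add_apply, hf, hg]; ring
      | single x c =>
          obtain ⟨⟨p, q⟩, s⟩ := x
          rw [single_bB]
          simp only [map_smul, LinearMap.smul_apply, smul_eq_mul]
          rw [ωab]; ring
    have ωanti : ∀ b₁ b₂ : PermB k, ω b₁ b₂ = - ω b₂ b₁ := by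
      intro b₁ b₂
      induction b₁ using Finsupp.induction_linear with
      | zero => simp
      | add f g hf hg =>
          simp only [map_add, LinearMap.add_apply, hf, hg]; ring
      | single x c =>
          obtain ⟨⟨p, q⟩, s⟩ := x
          rw [single_bB]
          simp only [map_smul, LinearMap.smul_apply, smul_eq_mul]
          rw [ωac]; ring
    -- the cocycle sum on B, basis level
    have cocyb : ∀ (a₁ a₂ a₃ : A) (p₁ q₁ p₂ q₂ p₃ q₃ : ℤ) (s₁ s₂ s₃ : Fin 2),
        ϖ (ast a₁ a₂) a₃ * ω (dia (bB k p₁ q₁ s₁) (bB k p₂ q₂ s₂)) (bB k p₃ q₃ s₃)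
        + ϖ (ast a₂ a₁) a₃ * ω (dia (bB k p₂ q₂ s₂) (bB k p₁ q₁ s₁)) (bB k p₃ q₃ s₃)
        + ϖ (ast a₂ a₃) a₁ * ω (dia (bB k p₂ q₂ s₂) (bB k p₃ q₃ s₃)) (bB k p₁ q₁ s₁)
        + ϖ (ast a₃ a₂) a₁ * ω (dia (bB k p₃ q₃ s₃) (bB k p₂ q₂ s₂)) (bB k p₁ q₁ s₁)
        + ϖ (ast a₃ a₁) a₂ * ω (dia (bB k p₃ q₃ s₃) (bB k p₁ q₁ s₁)) (bB k p₂ q₂ s₂)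
        + ϖ (ast a₁ a₃) a₂ * ω (dia (bB k p₁ q₁ s₁) (bB k p₃ q₃ s₃)) (bB k p₂ q₂ s₂)
        = 0 := by
      intro a₁ a₂ a₃ p₁ q₁ p₂ q₂ p₃ q₃ s₁ s₂ s₃
      fin_cases s₁ <;> fin_cases s₂ <;> fin_cases s₃ <;>
        simp [hdia, hω] <;> split_ifs <;>
        first
          | (exfalso; omega)
          | ring1
          | linear_combination K a₁ a₂ a₃
          | linear_combination K a₂ a₃ a₁
          | linear_combination K a₃ a₁ a₂
          | linear_combination K a₁ a₃ a₂
          | linear_combination K a₂ a₁ a₃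
          | linear_combination K a₃ a₂ a₁
          | linear_combination -K a₁ a₂ a₃
          | linear_combination -K a₂ a₃ a₁
          | linear_combination -K a₃ a₁ a₂
          | linear_combination -K a₁ a₃ a₂
          | linear_combination -K a₂ a₁ a₃
          | linear_combination -K a₃ a₂ a₁
    have cocyc : ∀ (a₁ a₂ a₃ : A) (p₁ q₁ p₂ q₂ : ℤ) (s₁ s₂ : Fin 2) (b₃ : PermB k),
        ϖ (ast a₁ a₂) a₃ * ω (dia (bB k p₁ q₁ s₁) (bB k p₂ q₂ s₂)) b₃
        + ϖ (ast a₂ a₁) a₃ * ω (dia (bB k p₂ q₂ s₂) (bB k p₁ q₁ s₁)) b₃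
        + ϖ (ast a₂ a₃) a₁ * ω (dia (bB k p₂ q₂ s₂) b₃) (bB k p₁ q₁ s₁)
        + ϖ (ast a₃ a₂) a₁ * ω (dia b₃ (bB k p₂ q₂ s₂)) (bB k p₁ q₁ s₁)
        + ϖ (ast a₃ a₁) a₂ * ω (dia b₃ (bB k p₁ q₁ s₁)) (bB k p₂ q₂ s₂)
        + ϖ (ast a₁ a₃) a₂ * ω (dia (bB k p₁ q₁ s₁) b₃) (bB k p₂ q₂ s₂)
        = 0 := by
      intro a₁ a₂ a₃ p₁ q₁ p₂ q₂ s₁ s₂ b₃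
      induction b₃ using Finsupp.induction_linear with
      | zero => simp
      | add f g hf hg =>
          simp only [map_add, LinearMap.add_apply, mul_add]
          linear_combination hf + hg
      | single x c =>
          obtain ⟨⟨p, q⟩, s⟩ := x
          rw [single_bB]
          simp only [map_smul, LinearMap.smul_apply, smul_eq_mul]
          linear_combination c * cocyb a₁ a₂ a₃ p₁ q₁ p₂ q₂ p q s₁ s₂ s
    have cocyd : ∀ (a₁ a₂ a₃ : A) (p₁ q₁ : ℤ) (s₁ : Fin 2) (b₂ b₃ : PermB k),
        ϖ (ast a₁ a₂) a₃ * ω (dia (bB k p₁ q₁ s₁) b₂) b₃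
        + ϖ (ast a₂ a₁) a₃ * ω (dia b₂ (bB k p₁ q₁ s₁)) b₃
        + ϖ (ast a₂ a₃) a₁ * ω (dia b₂ b₃) (bB k p₁ q₁ s₁)
        + ϖ (ast a₃ a₂) a₁ * ω (dia b₃ b₂) (bB k p₁ q₁ s₁)
        + ϖ (ast a₃ a₁) a₂ * ω (dia b₃ (bB k p₁ q₁ s₁)) b₂
        + ϖ (ast a₁ a₃) a₂ * ω (dia (bB k p₁ q₁ s₁) b₃) b₂
        = 0 := by
      intro a₁ a₂ a₃ p₁ q₁ s₁ b₂ b₃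
      induction b₂ using Finsupp.induction_linear with
      | zero => simp
      | add f g hf hg =>
          simp only [map_add, LinearMap.add_apply, mul_add]
          linear_combination hf + hg
      | single x c =>
          obtain ⟨⟨p, q⟩, s⟩ := x
          rw [single_bB]
          simp only [map_smul, LinearMap.smul_apply, smul_eq_mul]
          linear_combination c * cocyc a₁ a₂ a₃ p₁ q₁ p q s₁ s b₃
    have cocyB : ∀ (a₁ a₂ a₃ : A) (b₁ b₂ b₃ : PermB k),
        ϖ (ast a₁ a₂) a₃ * ω (dia b₁ b₂) b₃
        + ϖ (ast a₂ a₁) a₃ * ω (dia b₂ b₁) b₃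
        + ϖ (ast a₂ a₃) a₁ * ω (dia b₂ b₃) b₁
        + ϖ (ast a₃ a₂) a₁ * ω (dia b₃ b₂) b₁
        + ϖ (ast a₃ a₁) a₂ * ω (dia b₃ b₁) b₂
        + ϖ (ast a₁ a₃) a₂ * ω (dia b₁ b₃) b₂
        = 0 := by
      intro a₁ a₂ a₃ b₁ b₂ b₃
      induction b₁ using Finsupp.induction_linear with
      | zero => simp
      | add f g hf hg =>
          simp only [map_add, LinearMap.add_apply, mul_add]
          linear_combination hf + hg
      | single x c =>
          obtain ⟨⟨p, q⟩, s⟩ := x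
          rw [single_bB]
          simp only [map_smul, LinearMap.smul_apply, smul_eq_mul]
          linear_combination c * cocyd a₁ a₂ a₃ p q s b₂ b₃
    refine ⟨?_, ?_, ?_, ?_⟩
    · -- commutativity
      intro u v
      induction u using TensorProduct.induction_on with
      | zero => simp
      | add x y hx hy => simp only [map_add, LinearMap.add_apply, hx, hy]
      | tmul a b =>
          induction v using TensorProduct.induction_on with
          | zero => simp
          | add x y hx hy => simp only [map_add, LinearMap.add_apply, hx, hy]
          | tmul a' b' => rw [hm, hm, add_comm]
    · -- associativity
      intro u v w
      induction u using TensorProduct.induction_on with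
      | zero => simp
      | add x y hx hy => simp only [map_add, LinearMap.add_apply, hx, hy]
      | tmul a₁ b₁ =>
        induction v using TensorProduct.induction_on with
        | zero => simp
        | add x y hx hy => simp only [map_add, LinearMap.add_apply, hx, hy]
        | tmul a₂ b₂ =>
          induction w using TensorProduct.induction_on with
          | zero => simp
          | add x y hx hy => simp only [map_add, LinearMap.add_apply, hx, hy]
          | tmul a₃ b₃ =>
            simp only [hm, map_add, LinearMap.add_apply]
            simp only [pd1]
            rw [pd2 b₃ b₁ b₂, pd2 b₂ b₁ b₃, pd2 b₃ b₂ b₁]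
            have z1 : ast a₃ (ast a₁ a₂) = ast a₁ (ast a₃ a₂) := by
              rw [hzin a₃ a₁ a₂, hzin a₁ a₃ a₂, add_comm]
            have z2 : ast a₃ (ast a₂ a₁)
                = ast (ast a₂ a₃) a₁ + ast (ast a₃ a₂) a₁ := by
              rw [hzin a₃ a₂ a₁, add_comm]
            have z3 : ast a₁ (ast a₂ a₃)
                = ast (ast a₁ a₂) a₃ + ast (ast a₂ a₁) a₃ := hzin a₁ a₂ a₃
            rw [z1, z2, z3, add_tmul, add_tmul]
            abel
    · -- antisymmetry of Bf
      intro u v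
      induction u using TensorProduct.induction_on with
      | zero => simp
      | add x y hx hy =>
          simp only [map_add, LinearMap.add_apply, hx, hy]; ring
      | tmul a b =>
          induction v using TensorProduct.induction_on with
          | zero => simp
          | add x y hx hy =>
              simp only [map_add, LinearMap.add_apply, hx, hy]; ring
          | tmul a' b' =>
              rw [hBf, hBf, hsym a a', ωanti b b']; ring
    · -- cocycle
      intro u₁ u₂ u₃
      induction u₁ using TensorProduct.induction_on with
      | zero => simp
      | add x y hx hy =>
          simp only [map_add, LinearMap.add_apply]
          linear_combination hx + hy
      | tmul a₁ b₁ =>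
        induction u₂ using TensorProduct.induction_on with
        | zero => simp
        | add x y hx hy =>
            simp only [map_add, LinearMap.add_apply]
            linear_combination hx + hy
        | tmul a₂ b₂ =>
          induction u₃ using TensorProduct.induction_on with
          | zero => simp
          | add x y hx hy =>
              simp only [map_add, LinearMap.add_apply]
              linear_combination hx + hy
          | tmul a₃ b₃ =>
              simp only [hm, map_add, LinearMap.add_apply, hBf]
              linear_combination cocyB a₁ a₂ a₃ b₁ b₂ b₃
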